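/- Asymptotic limit of a contraction: let H be a complex Hilbert space and A a bounded operator on H with ‖A‖ ≤ 1. Then: (i) there exists a bounded self-adjoint operator Δ on H with 0 ≤ Δ ≤ I_H such that ‖A^n A^{*n} x − Δ x‖ → 0 as n → ∞ for every x ∈ H (Δ is the strong limit of the nonincreasing sequence of positive operators A^n A^{*n}); (ii) the fundamental identity A Δ A^* = Δ holds; (iii) for every x ∈ H, ⟨A^n (I − Δ) A^{*n} x, x⟩ → 0 as n → ∞; equivalently, ‖(I − Δ)^{1/2} A^{*n} x‖ → 0, where (I − Δ)^{1/2} denotes the positive square root of I − Δ. -/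

import Mathlib

set_option synthInstance.maxHeartbeats 1000000
set_option maxHeartbeats 4000000

open ContinuousLinearMap Filter

section Aux

open RCLike

variable {H : Type*} [NormedAddCommGroup H] [InnerProductSpace ℂ H] [CompleteSpace H]

local notation "⟪" x ", " y "⟫" => @inner ℂ _ _ x y

private lemma keyCS {S : H →L[ℂ] H} (hS : S.IsPositive) (x : H) :
    ‖S x‖ ^ 2 ≤ ‖S‖ * re ⟪S x, x⟫ := by
  have hS' : (0 : H →L[ℂ] H) ≤ S := (nonneg_iff_isPositive S).mpr hS
  set s := CFC.sqrt S with hs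
  have hs0 : (0 : H →L[ℂ] H) ≤ s := CFC.sqrt_nonneg S
  have hmul : s * s = S := CFC.sqrt_mul_sqrt_self S hS'
  have hsa : IsSelfAdjoint s := ((nonneg_iff_isPositive s).mp hs0).isSelfAdjoint
  have hadj : adjoint s = s := by rw [← star_eq_adjoint, hsa.star_eq]
  have h1 : re ⟪S x, x⟫ = ‖s x‖ ^ 2 := by
    conv_lhs => rw [← hmul]
    rw [ContinuousLinearMap.mul_apply, ← hadj, adjoint_inner_left, hadj, inner_self_eq_norm_sq]
  have h2 : ‖S x‖ ≤ ‖s‖ * ‖s x‖ := by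
    conv_lhs => rw [← hmul]
    rw [ContinuousLinearMap.mul_apply]
    exact le_opNorm s (s x)
  have h3 : ‖s‖ * ‖s‖ = ‖S‖ := by
    rw [← hmul]
    conv_lhs => rw [← CStarRing.norm_star_mul_self (x := s), hsa.star_eq]
  calc ‖S x‖ ^ 2 ≤ (‖s‖ * ‖s x‖) ^ 2 := by
        apply pow_le_pow_left₀ (norm_nonneg _) h2
    _ = ‖S‖ * ‖s x‖ ^ 2 := by rw [mul_pow, sq, h3]
    _ = ‖S‖ * re ⟪S x, x⟫ := by rw [h1]

end Aux

/-- **Asymptotic limit of a contraction.**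
If `‖A‖ ≤ 1` then the nonincreasing sequence `Aⁿ A*ⁿ` of positive operators converges
strongly to a positive contraction `Δ` satisfying the fundamental identity `A Δ A* = Δ`,
and `⟨Aⁿ (I - Δ) A*ⁿ x, x⟩ → 0`; equivalently `‖(I - Δ)^{1/2} A*ⁿ x‖ → 0`, where
`(I - Δ)^{1/2}` is the (unique) positive square root of `I - Δ`. -/
theorem asymptotic_limit_of_contraction
    {H : Type*} [NormedAddCommGroup H] [InnerProductSpace ℂ H] [CompleteSpace H]
    (A : H →L[ℂ] H) (hA : ‖A‖ ≤ 1) :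
    ∃ Δ : H →L[ℂ] H,
      Δ.IsPositive ∧ ((1 : H →L[ℂ] H) - Δ).IsPositive ∧
      (∀ x : H,
        Tendsto (fun n : ℕ => ‖(A ^ n * adjoint A ^ n) x - Δ x‖) atTop (nhds 0)) ∧
      A * Δ * adjoint A = Δ ∧
      (∀ x : H,
        Tendsto (fun n : ℕ =>
            (inner ℂ ((A ^ n * ((1 : H →L[ℂ] H) - Δ) * adjoint A ^ n) x) x : ℂ))
          atTop (nhds 0)) ∧
      ∀ R : H →L[ℂ] H, R.IsPositive → R * R = 1 - Δ →
        ∀ x : H, Tendsto (fun n : ℕ => ‖R ((adjoint A ^ n) x)‖) atTop (nhds 0) := by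
  set B := adjoint A with hB
  have hnormeq : ∀ y : H, (inner ℂ y y : ℂ) = ((‖y‖ ^ 2 : ℝ) : ℂ) := fun y => by
    rw [inner_self_eq_norm_sq_to_K]; norm_cast
  have hBnorm : ‖B‖ ≤ 1 := by
    rw [hB, LinearIsometryEquiv.norm_map]; exact hA
  have hptA : ∀ (n : ℕ) (x : H), ‖(A ^ n) x‖ ≤ ‖x‖ := by
    intro n; induction n with
    | zero => intro x; simp
    | succ n ih =>
      intro x
      rw [pow_succ', ContinuousLinearMap.mul_apply]
      calc ‖A ((A ^ n) x)‖ ≤ ‖A‖ * ‖(A ^ n) x‖ := le_opNorm A _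
        _ ≤ 1 * ‖x‖ := mul_le_mul hA (ih x) (norm_nonneg _) zero_le_one
        _ = ‖x‖ := one_mul _
  have hptB : ∀ (n : ℕ) (x : H), ‖(B ^ n) x‖ ≤ ‖x‖ := by
    intro n; induction n with
    | zero => intro x; simp
    | succ n ih =>
      intro x
      rw [pow_succ', ContinuousLinearMap.mul_apply]
      calc ‖B ((B ^ n) x)‖ ≤ ‖B‖ * ‖(B ^ n) x‖ := le_opNorm B _
        _ ≤ 1 * ‖x‖ := mul_le_mul hBnorm (ih x) (norm_nonneg _) zero_le_one
        _ = ‖x‖ := one_mul _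
  set T : ℕ → H →L[ℂ] H := fun n => A ^ n * B ^ n with hT
  have hadjpow : ∀ n : ℕ, adjoint (A ^ n) = B ^ n := by
    intro n
    rw [hB, ← star_eq_adjoint, ← star_eq_adjoint, ← star_pow]
  have hptT : ∀ (n : ℕ) (x : H), ‖T n x‖ ≤ ‖x‖ := by
    intro n x
    calc ‖(A ^ n) ((B ^ n) x)‖ ≤ ‖(B ^ n) x‖ := hptA n _
      _ ≤ ‖x‖ := hptB n x
  have hTpos : ∀ n, (T n).IsPositive := by
    intro n
    have h := (isPositive_one (E := H) (𝕜 := ℂ)).conj_adjoint (A ^ n)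
    rw [hadjpow] at h
    simpa [mul_def, T, one_def] using h
  have hinner : ∀ (n : ℕ) (x : H),
      (inner ℂ (T n x) x : ℂ) = ((‖(B ^ n) x‖ ^ 2 : ℝ) : ℂ) := by
    intro n x
    have h : (inner ℂ (T n x) x : ℂ) = inner ℂ ((B ^ n) x) ((B ^ n) x) := by
      show (inner ℂ ((A ^ n) ((B ^ n) x)) x : ℂ) = _
      rw [← ContinuousLinearMap.adjoint_inner_right, hadjpow]
    rw [h, hnormeq]
  set g : ℕ → H → ℝ := fun n x => ‖(B ^ n) x‖ ^ 2 with hg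
  have hg_anti : ∀ x, Antitone fun n => g n x := by
    intro x
    apply antitone_nat_of_succ_le
    intro n
    apply pow_le_pow_left₀ (norm_nonneg _)
    rw [pow_succ', ContinuousLinearMap.mul_apply]
    calc ‖B ((B ^ n) x)‖ ≤ ‖B‖ * ‖(B ^ n) x‖ := le_opNorm B _
      _ ≤ 1 * ‖(B ^ n) x‖ := mul_le_mul_of_nonneg_right hBnorm (norm_nonneg _)
      _ = ‖(B ^ n) x‖ := one_mul _
  have hg_nonneg : ∀ n x, 0 ≤ g n x := fun n x => sq_nonneg _
  have hg_le : ∀ n x, g n x ≤ ‖x‖ ^ 2 :=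
    fun n x => pow_le_pow_left₀ (norm_nonneg _) (hptB n x) 2
  have hg_lim : ∀ x : H, ∃ l : ℝ, Tendsto (fun n => g n x) atTop (nhds l) := by
    intro x
    exact ⟨_, tendsto_atTop_ciInf (hg_anti x) ⟨0, fun y hy => by
      obtain ⟨n, rfl⟩ := hy; exact hg_nonneg n x⟩⟩
  choose gl hgl using hg_lim
  have hgl_nonneg : ∀ x, 0 ≤ gl x :=
    fun x => ge_of_tendsto (hgl x) (Eventually.of_forall fun n => hg_nonneg n x)
  have hgl_le : ∀ x, gl x ≤ ‖x‖ ^ 2 :=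
    fun x => le_of_tendsto (hgl x) (Eventually.of_forall fun n => hg_le n x)
  have hdiff : ∀ n k : ℕ, T n - T (n + k) = A ^ n * (1 - T k) * B ^ n := by
    intro n k
    have h1 : A ^ (n + k) = A ^ n * A ^ k := pow_add A n k
    have h2 : B ^ (n + k) = B ^ k * B ^ n := by
      rw [pow_add, pow_mul_comm]
    simp only [T, mul_sub, sub_mul, mul_one, one_mul, h1, h2]
    rw [mul_assoc (A ^ n), mul_assoc (A ^ n), mul_assoc (A ^ k)]
  have hone_sub_Tpos : ∀ k, ((1 : H →L[ℂ] H) - T k).IsPositive := by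
    intro k
    constructor
    · exact IsSelfAdjoint.isSymmetric ((isPositive_one (E := H) (𝕜 := ℂ)).isSelfAdjoint.sub (hTpos k).isSelfAdjoint)
    · intro x
      have hx : (inner ℂ (((1 : H →L[ℂ] H) - T k) x) x : ℂ)
          = ((‖x‖ ^ 2 - g k x : ℝ) : ℂ) := by
        rw [sub_apply, inner_sub_left, ContinuousLinearMap.one_apply, hnormeq, hinner]
        simp only [hg]
        norm_cast
      show (0 : ℝ) ≤ RCLike.re (inner ℂ (((1 : H →L[ℂ] H) - T k) x) x : ℂ)
      rw [hx]
      exact sub_nonneg.mpr (hg_le k x)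
  have hpos_diff : ∀ n k, (T n - T (n + k)).IsPositive := by
    intro n k
    rw [hdiff]
    have h := (hone_sub_Tpos k).conj_adjoint (A ^ n)
    rw [hadjpow] at h
    simpa [mul_def, one_def, comp_assoc] using h
  have hnorm_diff : ∀ n k, ‖T n - T (n + k)‖ ≤ 2 := by
    intro n k
    have h1 : ‖T n‖ ≤ 1 := opNorm_le_bound _ zero_le_one fun x => by
      simpa using hptT n x
    have h2 : ‖T (n + k)‖ ≤ 1 := opNorm_le_bound _ zero_le_one fun x => by
      simpa using hptT (n + k) x
    calc ‖T n - T (n + k)‖ ≤ ‖T n‖ + ‖T (n + k)‖ := norm_sub_le _ _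
      _ ≤ 2 := by linarith
  have hre_diff : ∀ (n k : ℕ) (x : H),
      RCLike.re (inner ℂ ((T n - T (n + k)) x) x : ℂ) = g n x - g (n + k) x := by
    intro n k x
    rw [sub_apply, inner_sub_left, hinner, hinner, map_sub]
    rfl
  have hkey : ∀ (n k : ℕ) (x : H),
      ‖T n x - T (n + k) x‖ ^ 2 ≤ 2 * (g n x - g (n + k) x) := by
    intro n k x
    have h := keyCS (hpos_diff n k) x
    rw [hre_diff] at h
    have hgd : 0 ≤ g n x - g (n + k) x :=
      sub_nonneg.mpr (hg_anti x (Nat.le_add_right n k))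
    calc ‖T n x - T (n + k) x‖ ^ 2 = ‖(T n - T (n + k)) x‖ ^ 2 := by rw [sub_apply]
      _ ≤ ‖T n - T (n + k)‖ * (g n x - g (n + k) x) := h
      _ ≤ 2 * (g n x - g (n + k) x) :=
          mul_le_mul_of_nonneg_right (hnorm_diff n k) hgd
  have hcauchy : ∀ x : H, CauchySeq fun n => T n x := by
    intro x
    rw [Metric.cauchySeq_iff]
    have hgc : CauchySeq fun n => g n x := (hgl x).cauchySeq
    rw [Metric.cauchySeq_iff] at hgc
    intro ε hε
    obtain ⟨N, hN⟩ := hgc (ε ^ 2 / 2) (by positivity)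
    refine ⟨N, fun m hm n hn => ?_⟩
    wlog hmn : n ≤ m generalizing m n
    · rw [dist_comm]; exact this n hn m hm (le_of_not_ge hmn)
    obtain ⟨k, rfl⟩ := Nat.exists_eq_add_of_le hmn
    rw [dist_eq_norm, norm_sub_rev]
    have h2 := hkey n k x
    have h3 : g n x - g (n + k) x < ε ^ 2 / 2 := by
      have h4 := hN n hn (n + k) hm
      rw [Real.dist_eq] at h4
      calc g n x - g (n + k) x ≤ |g n x - g (n + k) x| := le_abs_self _
        _ < ε ^ 2 / 2 := h4
    have h5 : ‖T n x - T (n + k) x‖ ^ 2 < ε ^ 2 := by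
      calc ‖T n x - T (n + k) x‖ ^ 2 ≤ 2 * (g n x - g (n + k) x) := h2
        _ < 2 * (ε ^ 2 / 2) := by linarith
        _ = ε ^ 2 := by ring
    exact lt_of_pow_lt_pow_left₀ 2 hε.le h5
  have hlim : ∀ x : H, ∃ y : H, Tendsto (fun n => T n x) atTop (nhds y) :=
    fun x => cauchySeq_tendsto_of_complete (hcauchy x)
  choose Δf hΔf using hlim
  have hΔadd : ∀ x y, Δf (x + y) = Δf x + Δf y := by
    intro x y
    refine tendsto_nhds_unique (hΔf (x + y)) ?_
    have h := (hΔf x).add (hΔf y)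
    have heq : (fun n => T n x + T n y) = fun n => T n (x + y) := by
      funext n; rw [← map_add]
    rwa [heq] at h
  have hΔsmul : ∀ (c : ℂ) (x : H), Δf (c • x) = c • Δf x := by
    intro c x
    refine tendsto_nhds_unique (hΔf (c • x)) ?_
    have h := (hΔf x).const_smul c
    have heq : (fun n => c • T n x) = fun n => T n (c • x) := by
      funext n; rw [← map_smul]
    rwa [heq] at h
  have hΔbound : ∀ x, ‖Δf x‖ ≤ 1 * ‖x‖ := by
    intro x
    rw [one_mul]
    exact le_of_tendsto (hΔf x).norm (Eventually.of_forall fun n => hptT n x)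
  set Δ : H →L[ℂ] H := LinearMap.mkContinuous
    { toFun := Δf, map_add' := hΔadd,
      map_smul' := fun c x => by simpa using hΔsmul c x } 1 hΔbound with hΔdef
  have hΔapp : ∀ x, Δ x = Δf x := fun x => rfl
  have hstrong : ∀ x, Tendsto (fun n => T n x - Δ x) atTop (nhds 0) := by
    intro x
    rw [hΔapp]
    have := (hΔf x).sub (tendsto_const_nhds (x := Δf x))
    rwa [sub_self] at this
  have hstrong_norm : ∀ x, Tendsto (fun n => ‖T n x - Δ x‖) atTop (nhds 0) := by
    intro x
    simpa using (hstrong x).norm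
  have hΔinner : ∀ x, (inner ℂ (Δ x) x : ℂ) = ((gl x : ℝ) : ℂ) := by
    intro x
    have h1 : Tendsto (fun n => (inner ℂ (T n x) x : ℂ)) atTop (nhds (inner ℂ (Δ x) x)) := by
      rw [hΔapp]
      exact Filter.Tendsto.inner (𝕜 := ℂ) (hΔf x) tendsto_const_nhds
    have h2 : Tendsto (fun n => (inner ℂ (T n x) x : ℂ)) atTop (nhds ((gl x : ℝ) : ℂ)) := by
      have heq : (fun n => (inner ℂ (T n x) x : ℂ)) = fun n => ((g n x : ℝ) : ℂ) :=
        funext fun n => hinner n x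
      rw [heq]
      exact (Complex.continuous_ofReal.tendsto _).comp (hgl x)
    exact tendsto_nhds_unique h1 h2
  have hΔpos : Δ.IsPositive := by
    rw [isPositive_iff_complex]
    intro x
    rw [hΔinner]
    constructor
    · norm_cast
    · exact hgl_nonneg x
  have hone_sub_Δpos : ((1 : H →L[ℂ] H) - Δ).IsPositive := by
    rw [isPositive_iff_complex]
    intro x
    have hx : (inner ℂ (((1 : H →L[ℂ] H) - Δ) x) x : ℂ) = ((‖x‖ ^ 2 - gl x : ℝ) : ℂ) := by
      rw [sub_apply, inner_sub_left, ContinuousLinearMap.one_apply, hnormeq, hΔinner]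
      norm_cast
    rw [hx]
    constructor
    · norm_cast
    · exact sub_nonneg.mpr (hgl_le x)
  have hfund : A * Δ * B = Δ := by
    ext x
    have h1 : Tendsto (fun n => A (T n (B x))) atTop (nhds (A (Δf (B x)))) :=
      (A.continuous.tendsto _).comp (hΔf (B x))
    have h2 : (fun n => A (T n (B x))) = fun n => T (n + 1) x := by
      funext n
      have hmm : A * T n * B = T (n + 1) := by
        show A * (A ^ n * B ^ n) * B = A ^ (n + 1) * B ^ (n + 1)
        rw [pow_succ' A, pow_succ B]
        simp only [mul_assoc]
      calc A (T n (B x)) = (A * T n * B) x := rfl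
        _ = T (n + 1) x := by rw [hmm]
    rw [h2] at h1
    have h3 : Tendsto (fun n => T (n + 1) x) atTop (nhds (Δf x)) :=
      (hΔf x).comp (tendsto_add_atTop_nat 1)
    have h4 := tendsto_nhds_unique h1 h3
    show A (Δ (B x)) = Δ x
    rw [hΔapp, hΔapp, h4]
  have hfund_pow : ∀ k : ℕ, A ^ k * Δ * B ^ k = Δ := by
    intro k; induction k with
    | zero => simp
    | succ k ih =>
      rw [pow_succ' A, pow_succ B]
      have hassoc : A * (A ^ k * Δ * B ^ k) * B = A * A ^ k * Δ * (B ^ k * B) := by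
        simp only [mul_assoc]
      rw [← hassoc, ih, hfund]
  have hconj : ∀ n : ℕ, A ^ n * (1 - Δ) * B ^ n = T n - Δ := by
    intro n
    rw [mul_sub, mul_one, sub_mul, hfund_pow n]
  have hiii : ∀ x : H,
      Tendsto (fun n : ℕ => (inner ℂ ((A ^ n * ((1 : H →L[ℂ] H) - Δ) * B ^ n) x) x : ℂ))
        atTop (nhds 0) := by
    intro x
    have h1 : (fun n : ℕ => (inner ℂ ((A ^ n * ((1 : H →L[ℂ] H) - Δ) * B ^ n) x) x : ℂ))
        = fun n => (inner ℂ (T n x - Δ x) x : ℂ) := by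
      funext n; rw [hconj n, sub_apply]
    rw [h1]
    have h2 := Filter.Tendsto.inner (𝕜 := ℂ) (hstrong x) (tendsto_const_nhds (x := x))
    rw [inner_zero_left] at h2; exact h2
  refine ⟨Δ, hΔpos, hone_sub_Δpos, fun x => hstrong_norm x, hfund, hiii, ?_⟩
  intro R hR hRR x
  have hRadj : adjoint R = R := by rw [← star_eq_adjoint, hR.isSelfAdjoint.star_eq]
  have hnormsq : ∀ n : ℕ,
      ‖R ((B ^ n) x)‖ ^ 2 = RCLike.re (inner ℂ ((T n - Δ) x) x : ℂ) := by
    intro n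
    have e1 : (inner ℂ ((T n - Δ) x) x : ℂ)
        = inner ℂ ((((1 : H →L[ℂ] H) - Δ)) ((B ^ n) x)) ((B ^ n) x) := by
      rw [← hconj n]
      show (inner ℂ ((A ^ n) ((((1 : H →L[ℂ] H) - Δ) * B ^ n) x)) x : ℂ) = _
      rw [← ContinuousLinearMap.adjoint_inner_right, hadjpow, ContinuousLinearMap.mul_apply]
    have e2 : (inner ℂ ((((1 : H →L[ℂ] H) - Δ)) ((B ^ n) x)) ((B ^ n) x) : ℂ)
        = inner ℂ (R ((B ^ n) x)) (R ((B ^ n) x)) := by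
      have hai : (inner ℂ ((adjoint R) (R ((B ^ n) x))) ((B ^ n) x) : ℂ)
          = inner ℂ (R ((B ^ n) x)) (R ((B ^ n) x)) :=
        ContinuousLinearMap.adjoint_inner_left R _ _
      conv_rhs => rw [← hai, hRadj, ← ContinuousLinearMap.mul_apply, hRR]
    rw [e1, e2, hnormeq]
    rfl
  have hre0 : Tendsto (fun n => RCLike.re (inner ℂ ((T n - Δ) x) x : ℂ)) atTop (nhds 0) := by
    have h1 : Tendsto (fun n => (inner ℂ ((T n - Δ) x) x : ℂ)) atTop (nhds 0) := by
      have h2 := Filter.Tendsto.inner (𝕜 := ℂ) (hstrong x) (tendsto_const_nhds (x := x))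
      have heq : (fun n => (inner ℂ ((T n - Δ) x) x : ℂ))
          = fun n => (inner ℂ (T n x - Δ x) x : ℂ) := by
        funext n; rw [sub_apply]
      rw [heq]
      rw [inner_zero_left] at h2; exact h2
    have := (RCLike.continuous_re.tendsto (0 : ℂ)).comp h1
    simpa [Function.comp_def] using this
  have hsq : Tendsto (fun n => ‖R ((B ^ n) x)‖ ^ 2) atTop (nhds 0) := by
    have heq : (fun n => ‖R ((B ^ n) x)‖ ^ 2)
        = fun n => RCLike.re (inner ℂ ((T n - Δ) x) x : ℂ) := funext fun n => hnormsq n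
    rw [heq]; exact hre0
  have heq2 : (fun n : ℕ => ‖R ((B ^ n) x)‖)
      = fun n => Real.sqrt (‖R ((B ^ n) x)‖ ^ 2) :=
    funext fun n => (Real.sqrt_sq (norm_nonneg _)).symm
  have := (Real.continuous_sqrt.tendsto 0).comp hsq
  simpa [Function.comp_def, Real.sqrt_sq_eq_abs] using this
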